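/- Let C be a small category equipped with a Grothendieck topology J, T a small category, and τ : C ⥤ T a functor. Then the category Mod^T of Linton models is closed under all small limits computed in Psh(T) (so in particular Mod^T has all small limits, created by the inclusion Mod^T ↪ Psh(T)), and Mod^T has all small colimits. -/

import Mathlib

open CategoryTheory CategoryTheory.Limits Opposite

universe u v w w'

/-- The Mathlib (December 2024) notion, removed since: `P` is closed under limits of shape `J`. -/
def ClosedUnderLimitsOfShape {C : Type u} [Category.{v} C] (J : Type w) [Category.{w'} J]
    (P : C → Prop) : Prop :=
  ∀ ⦃F : J ⥤ C⦄ ⦃c : Cone F⦄ (_hc : IsLimit c), (∀ j, P (F.obj j)) → P c.pt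

namespace LintonAux

variable {C : Type u} [SmallCategory C] (J : GrothendieckTopology C)
variable {T : Type u} [SmallCategory T] (τ : C ⥤ T) (A : Tᵒᵖ ⥤ Type u)

theorem closed (S : Type u) [SmallCategory S] :
    ClosedUnderLimitsOfShape S (fun M : Tᵒᵖ ⥤ Type u => Presieve.IsSheaf J (τ.op ⋙ M)) := by
  intro F c hc hF
  let F' : S ⥤ Sheaf J (Type u) :=
    { obj := fun s => ⟨τ.op ⋙ F.obj s, (isSheaf_iff_isSheaf_of_type _ _).2 (hF s)⟩
      map := fun f => ⟨Functor.whiskerLeft τ.op (F.map f)⟩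
      map_id := fun s => Sheaf.hom_ext (by simp)
      map_comp := fun f g => Sheaf.hom_ext (by simp) }
  have hE := isLimitOfPreserves ((Functor.whiskeringLeft Cᵒᵖ Tᵒᵖ (Type u)).obj τ.op) hc
  exact (isSheaf_iff_isSheaf_of_type _ _).1
    (Sheaf.isSheaf_of_isLimit (J := J) F'
      (((Functor.whiskeringLeft Cᵒᵖ Tᵒᵖ (Type u)).obj τ.op).mapCone c) hE)

theorem isClosed (S : Type u) [SmallCategory S] :
    ObjectProperty.IsClosedUnderLimitsOfShape
      (fun M : Tᵒᵖ ⥤ Type u => Presieve.IsSheaf J (τ.op ⋙ M)) S :=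
  ⟨fun X hX => by
    obtain ⟨h⟩ := hX
    exact closed J τ S h.isLimit h.prop_diag_obj⟩


inductive Code : T → Type u
  | gen (t : T) (a : A.obj (op t)) : Code t
  | map {t t' : T} (f : t' ⟶ t) (x : Code t) : Code t'
  | amalg (c : C) (S : Sieve c) (hS : S ∈ J c)
      (fam : ∀ ⦃c' : C⦄ (f : c' ⟶ c), S.arrows f → Code (τ.obj c')) : Code (τ.obj c)

variable {X : Tᵒᵖ ⥤ Type u}

open scoped Classical in
noncomputable def eval (hX : Presieve.IsSheaf J (τ.op ⋙ X)) (h : A ⟶ X) : ∀ {t : T}, Code J τ A t → Option (X.obj (op t))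
  | _, .gen t a => some (h.app (op t) a)
  | _, .map f x => (eval hX h x).map (X.map f.op)
  | _, .amalg c S hS fam =>
    if hc : ∃ y : Presieve.FamilyOfElements (τ.op ⋙ X) S.arrows,
        y.Compatible ∧ ∀ ⦃c'⦄ (f : c' ⟶ c) (hf : S.arrows f), eval hX h (fam f hf) = some (y f hf)
    then some ((hX S hS hc.choose hc.choose_spec.1).exists.choose)
    else none

theorem eval_amalg (hX : Presieve.IsSheaf J (τ.op ⋙ X)) (h : A ⟶ X) {c : C} {S : Sieve c} (hS : S ∈ J c)
    (fam : ∀ ⦃c' : C⦄ (f : c' ⟶ c), S.arrows f → Code J τ A (τ.obj c'))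
    (y : Presieve.FamilyOfElements (τ.op ⋙ X) S.arrows) (hy : y.Compatible)
    (hfam : ∀ ⦃c'⦄ (f : c' ⟶ c) (hf : S.arrows f), eval J τ A hX h (fam f hf) = some (y f hf))
    (z : X.obj (op (τ.obj c))) (hz : y.IsAmalgamation z) :
    eval J τ A hX h (.amalg c S hS fam) = some z := by
  have hex : ∃ y' : Presieve.FamilyOfElements (τ.op ⋙ X) S.arrows,
      y'.Compatible ∧ ∀ ⦃c'⦄ (f : c' ⟶ c) (hf : S.arrows f),
        eval J τ A hX h (fam f hf) = some (y' f hf) := ⟨y, hy, hfam⟩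
  rw [eval, dif_pos hex]
  have hyy : hex.choose = y := by
    funext c' f hf
    have h1 := hex.choose_spec.2 f hf
    have h2 := hfam f hf
    rw [h1] at h2
    exact Option.some.inj h2
  have ht : hex.choose.IsAmalgamation
      ((hX S hS hex.choose hex.choose_spec.1).exists.choose) :=
    (hX S hS hex.choose hex.choose_spec.1).exists.choose_spec
  have hz' : hex.choose.IsAmalgamation z := hyy ▸ hz
  exact congrArg some ((hX S hS hex.choose hex.choose_spec.1).unique ht hz')


def InG (hX : Presieve.IsSheaf J (τ.op ⋙ X)) (h : A ⟶ X) (t : T) (x : X.obj (op t)) : Prop :=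
  ∃ code : Code J τ A t, eval J τ A hX h code = some x

variable (hX : Presieve.IsSheaf J (τ.op ⋙ X)) (h : A ⟶ X)

@[simps]
def Gfun : Tᵒᵖ ⥤ Type u where
  obj t := { x : X.obj t // InG J τ A hX h t.unop x }
  map f := TypeCat.ofHom fun x => ⟨X.map f x.1, by
    obtain ⟨cd, hcd⟩ := x.2
    exact ⟨.map f.unop cd, by rw [eval, hcd]; rfl⟩⟩
  map_id t := by apply TypeCat.homEquiv.injective; funext x; apply Subtype.ext; exact FunctorToTypes.map_id_apply X x.1
  map_comp f g := by apply TypeCat.homEquiv.injective; funext x; apply Subtype.ext; exact FunctorToTypes.map_comp_apply X f g x.1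

def ginc : Gfun J τ A hX h ⟶ X where
  app t := TypeCat.ofHom fun x => x.1
  naturality t t' f := rfl

def gres : A ⟶ Gfun J τ A hX h where
  app t := TypeCat.ofHom fun a => ⟨h.app t a, ⟨.gen t.unop a, rfl⟩⟩
  naturality t t' f := by
    apply TypeCat.homEquiv.injective; funext a
    apply Subtype.ext
    exact FunctorToTypes.naturality h f a

theorem gres_ginc : gres J τ A hX h ≫ ginc J τ A hX h = h := rfl

theorem pred_Gfun : Presieve.IsSheaf J (τ.op ⋙ Gfun J τ A hX h) := by
  intro c S hS y hy
  let y' : Presieve.FamilyOfElements (τ.op ⋙ X) S.arrows := fun c' f hf => (y f hf).1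
  have hy' : y'.Compatible := by
    intro c₁ c₂ c₃ g₁ g₂ f₁ f₂ h₁ h₂ hcomm
    exact congrArg Subtype.val (hy g₁ g₂ h₁ h₂ hcomm)
  obtain ⟨z, hz⟩ := (hX S hS y' hy').exists
  have hch : ∀ ⦃c' : C⦄ (f : c' ⟶ c) (hf : S.arrows f),
      eval J τ A hX h ((y f hf).2.choose) = some (y' f hf) := fun c' f hf => (y f hf).2.choose_spec
  have hcode : eval J τ A hX h (.amalg c S hS (fun c' f hf => (y f hf).2.choose)) = some z :=
    eval_amalg J τ A hX h hS _ y' hy' hch z hz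
  refine ⟨⟨z, _, hcode⟩, fun c' f hf => ?_, fun w hw => ?_⟩
  · apply Subtype.ext
    exact hz f hf
  · apply Subtype.ext
    have hw' : y'.IsAmalgamation w.1 := fun c' f hf => congrArg Subtype.val (hw f hf)
    exact (hX S hS y' hy').unique hw' hz


structure SPsh where
  obj : ∀ _ : T, Set (Σ t : T, Code J τ A t)
  map : ∀ {t t' : T}, (t' ⟶ t) → obj t → obj t'
  map_id : ∀ (t : T) (x : obj t), map (𝟙 t) x = x
  map_comp : ∀ {t t' t'' : T} (g : t'' ⟶ t') (f : t' ⟶ t) (x : obj t),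
    map (g ≫ f) x = map g (map f x)

variable {J τ A} in
def SPsh.toPresheaf (N : SPsh J τ A) : Tᵒᵖ ⥤ Type u where
  obj t := N.obj t.unop
  map f := TypeCat.ofHom fun x => N.map f.unop x
  map_id t := by apply TypeCat.homEquiv.injective; funext x; exact N.map_id t.unop x
  map_comp f g := by apply TypeCat.homEquiv.injective; funext x; exact N.map_comp g.unop f.unop x

variable {J τ A} in
noncomputable def transport (Y : Tᵒᵖ ⥤ Type u)
    (e : ∀ t : T, Y.obj (op t) ↪ (Σ t : T, Code J τ A t)) : SPsh J τ A where
  obj t := Set.range (e t)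
  map {t t'} f x :=
    Equiv.ofInjective _ (e t').injective
      (Y.map f.op ((Equiv.ofInjective _ (e t).injective).symm x))
  map_id t x := by
    simp only [CategoryTheory.op_id, FunctorToTypes.map_id_apply, Equiv.apply_symm_apply]
  map_comp {t t' t''} g f x := by
    simp only [CategoryTheory.op_comp, FunctorToTypes.map_comp_apply, Equiv.symm_apply_apply]

variable {J τ A} in
noncomputable def transportIso (Y : Tᵒᵖ ⥤ Type u)
    (e : ∀ t : T, Y.obj (op t) ↪ (Σ t : T, Code J τ A t)) :
    (transport Y e).toPresheaf ≅ Y :=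
  NatIso.ofComponents
    (fun t => Equiv.toIso (X := (transport Y e).toPresheaf.obj t) (Y := Y.obj t)
      ((Equiv.ofInjective _ (e t.unop).injective).symm))
    (by
      intro t t' f
      apply TypeCat.homEquiv.injective; funext x
      show (Equiv.ofInjective _ (e t'.unop).injective).symm
          ((transport Y e).map f.unop x) = Y.map f ((Equiv.ofInjective _ (e t.unop).injective).symm x)
      exact Equiv.symm_apply_apply (Equiv.ofInjective _ (e t'.unop).injective)
        (Y.map f ((Equiv.ofInjective _ (e t.unop).injective).symm x)))


theorem solutionSet :
    SolutionSetCondition.{u} (ObjectProperty.ι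
      (fun M : Tᵒᵖ ⥤ Type u => Presieve.IsSheaf J (τ.op ⋙ M))) := by
  intro A
  classical
  refine ⟨Σ N : {N : SPsh J τ A // Presieve.IsSheaf J (τ.op ⋙ N.toPresheaf)},
      (A ⟶ N.1.toPresheaf),
    fun i => ⟨i.1.1.toPresheaf, i.1.2⟩, fun i => i.2, ?_⟩
  intro X h
  have hX : Presieve.IsSheaf J (τ.op ⋙ X.obj) := X.property
  let e : ∀ t : T, (Gfun J τ A hX h).obj (op t) ↪ (Σ t : T, Code J τ A t) := fun t =>
    ⟨fun x => ⟨t, x.2.choose⟩, by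
      intro x y hxy
      have h2 : x.2.choose = y.2.choose := sigma_mk_injective hxy
      have hx := x.2.choose_spec
      rw [h2, y.2.choose_spec] at hx
      exact Subtype.ext (Option.some.inj hx).symm⟩
  have predN : Presieve.IsSheaf J (τ.op ⋙ (transport (Gfun J τ A hX h) e).toPresheaf) :=
    Presieve.isSheaf_iso J (Functor.isoWhiskerLeft τ.op (transportIso _ e).symm) (pred_Gfun J τ A hX h)
  refine ⟨⟨⟨transport (Gfun J τ A hX h) e, predN⟩,
      gres J τ A hX h ≫ (transportIso _ e).inv⟩,
    ObjectProperty.homMk (show (transport (Gfun J τ A hX h) e).toPresheaf ⟶ X.obj from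
      (transportIso _ e).hom ≫ ginc J τ A hX h), ?_⟩
  show (gres J τ A hX h ≫ (transportIso _ e).inv) ≫
      ((transportIso _ e).hom ≫ ginc J τ A hX h) = h
  rw [Category.assoc, Iso.inv_hom_id_assoc, gres_ginc]

end LintonAux

open LintonAux in
/-- For a Linton theory `τ : C ⥤ T` over a site `(C, J)`, the category of
Linton models is closed under all small limits computed in the presheaf category `Psh(T)`,
has all small limits (created by the full inclusion), and has all small colimits. -/
theorem linton_models_complete_cocomplete {C : Type u} [SmallCategory C]
    (J : GrothendieckTopology C) {T : Type u} [SmallCategory T] (τ : C ⥤ T) :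
    (∀ (S : Type u) (_ : SmallCategory S),
      ClosedUnderLimitsOfShape S (fun M : Tᵒᵖ ⥤ Type u => Presieve.IsSheaf J (τ.op ⋙ M))) ∧
    HasLimits (ObjectProperty.FullSubcategory (fun M : Tᵒᵖ ⥤ Type u => Presieve.IsSheaf J (τ.op ⋙ M))) ∧
    Nonempty (CreatesLimits (ObjectProperty.ι
      (fun M : Tᵒᵖ ⥤ Type u => Presieve.IsSheaf J (τ.op ⋙ M)))) ∧
    HasColimits (ObjectProperty.FullSubcategory (fun M : Tᵒᵖ ⥤ Type u => Presieve.IsSheaf J (τ.op ⋙ M))) := by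
  have hcl := fun (S : Type u) (_ : SmallCategory S) => closed J τ S
  have hasLim : HasLimits (ObjectProperty.FullSubcategory
      (fun M : Tᵒᵖ ⥤ Type u => Presieve.IsSheaf J (τ.op ⋙ M))) :=
    { has_limits_of_shape := fun S _ => by haveI := isClosed J τ S; infer_instance }
  have creates : CreatesLimits (ObjectProperty.ι
      (fun M : Tᵒᵖ ⥤ Type u => Presieve.IsSheaf J (τ.op ⋙ M))) :=
    { CreatesLimitsOfShape := fun {S} {_} =>
        by haveI := isClosed J τ S; infer_instance }
  refine ⟨hcl, hasLim, ⟨creates⟩, ?_⟩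
  letI := hasLim
  letI := creates
  letI : PreservesLimits (ObjectProperty.ι
      (fun M : Tᵒᵖ ⥤ Type u => Presieve.IsSheaf J (τ.op ⋙ M))) :=
    preservesLimits_of_createsLimits_and_hasLimits _
  have hra := isRightAdjoint_of_preservesLimits_of_solutionSetCondition _ (solutionSet J τ)
  letI : Reflective (ObjectProperty.ι
      (fun M : Tᵒᵖ ⥤ Type u => Presieve.IsSheaf J (τ.op ⋙ M))) :=
    { L := _, adj := Adjunction.ofIsRightAdjoint _ }
  exact hasColimits_of_reflective (ObjectProperty.ι
      (fun M : Tᵒᵖ ⥤ Type u => Presieve.IsSheaf J (τ.op ⋙ M)))
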